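/- Let K ⊂ ℂ be the generalized Cantor set with δ = 1/4, t_m = 4^{m-1}, and μ the weak limit of the knot-point measures μ_m. Then the potential U^μ(z) = ∫ ln|z−w| dμ(w) satisfies the upper bound: there are constants C₁, C₂ such that for all z ∉ K with dist(z,K) < 1, U^μ(z) ≤ C₁ · ln(dist(z,K)) / √(ln(1/dist(z,K))) + C₂. In particular U^μ(z) → −∞ as z → K, but U^μ(z)/ln dist(z,K) → 0. -/

import Mathlib

open MeasureTheory Filter

def cantorT (m : ℕ) : ℕ := if m = 0 then 0 else 4 ^ (m - 1)

noncomputable def cantorLen (m : ℕ) : ℝ := (1 / 4 : ℝ) ^ cantorT m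

noncomputable def cantorLeft (m : ℕ) (c : Fin m → Bool) : ℝ :=
  ∑ j : Fin m, if c j then cantorLen j - cantorLen (j + 1) else 0

noncomputable def cantorStage (m : ℕ) : Set ℝ :=
  {x | ∃ c : Fin m → Bool, cantorLeft m c ≤ x ∧ x ≤ cantorLeft m c + cantorLen m}

/-- The generalized Cantor set with `δ = 1/4`, `t m = 4^(m-1)`, viewed inside `ℂ`. -/
noncomputable def cantorSetC : Set ℂ :=
  (fun x : ℝ => (x : ℂ)) '' ⋂ m, cantorStage m

/-- The uniform probability measure on the `2^(m+1)` knot points of stage `m`. -/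
noncomputable def knotMeasure (m : ℕ) : Measure ℂ :=
  ((2 : ENNReal) ^ (m + 1))⁻¹ •
    ∑ p : (Fin m → Bool) × Bool,
      Measure.dirac ((cantorLeft m p.1 + if p.2 then cantorLen m else 0 : ℝ) : ℂ)

lemma cantorLen_pos (m : ℕ) : 0 < cantorLen m := by
  unfold cantorLen; positivity

lemma cantorLen_zero : cantorLen 0 = 1 := by simp [cantorLen, cantorT]

lemma cantorT_mono : Monotone cantorT := by
  intro a b hab
  rcases Nat.eq_zero_or_pos a with h | h
  · simp [cantorT, h]
  · have ha : a ≠ 0 := by omega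
    have hb : b ≠ 0 := by omega
    simp only [cantorT, if_neg ha, if_neg hb]
    exact Nat.pow_le_pow_right (by norm_num) (by omega)

lemma cantorLen_anti : Antitone cantorLen := by
  intro a b hab
  exact pow_le_pow_of_le_one (by norm_num) (by norm_num) (cantorT_mono hab)

lemma cantorLen_le_one (m : ℕ) : cantorLen m ≤ 1 := by
  simpa [cantorLen_zero] using cantorLen_anti (Nat.zero_le m)

lemma cantorLeft_sum_range (m : ℕ) (c : Fin m → Bool) :
    cantorLeft m c = ∑ j ∈ Finset.range m,
      if h : j < m then (if c ⟨j, h⟩ then cantorLen j - cantorLen (j + 1) else 0) else 0 := by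
  rw [cantorLeft, ← Fin.sum_univ_eq_sum_range
    (fun j => if h : j < m then (if c ⟨j, h⟩ then cantorLen j - cantorLen (j + 1) else 0) else 0) m]
  apply Finset.sum_congr rfl
  intro j _
  simp [j.isLt]

lemma cantorLeft_nonneg (m : ℕ) (c : Fin m → Bool) : 0 ≤ cantorLeft m c := by
  apply Finset.sum_nonneg
  intro j _
  split
  · linarith [cantorLen_anti (Nat.le_succ (j : ℕ))]
  · exact le_refl 0

lemma cantorLeft_le (m : ℕ) (c : Fin m → Bool) : cantorLeft m c + cantorLen m ≤ 1 := by
  have h1 : cantorLeft m c ≤ ∑ j ∈ Finset.range m, (cantorLen j - cantorLen (j + 1)) := by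
    rw [cantorLeft_sum_range]
    apply Finset.sum_le_sum
    intro j hj
    rw [dif_pos (Finset.mem_range.mp hj)]
    split
    · exact le_refl _
    · linarith [cantorLen_anti (Nat.le_succ j)]
  rw [Finset.sum_range_sub' cantorLen m, cantorLen_zero] at h1
  linarith

/-- key nesting lemma -/
lemma cantorLeft_nest {m n : ℕ} (hmn : m ≤ n) (c : Fin m → Bool) (c' : Fin n → Bool)
    (hcc : ∀ j : Fin m, c' (Fin.castLE hmn j) = c j) :
    cantorLeft m c ≤ cantorLeft n c' ∧
      cantorLeft n c' + cantorLen n ≤ cantorLeft m c + cantorLen m := by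
  set g : ℕ → ℝ := fun j => if h : j < n then
      (if c' ⟨j, h⟩ then cantorLen j - cantorLen (j + 1) else 0) else 0 with hg
  have hgnn : ∀ j, 0 ≤ g j := by
    intro j
    simp only [hg]
    split
    · split
      · linarith [cantorLen_anti (Nat.le_succ j)]
      · exact le_refl 0
    · exact le_refl 0
  have hsplit : cantorLeft n c' = ∑ j ∈ Finset.range m, g j + ∑ j ∈ Finset.Ico m n, g j := by
    rw [cantorLeft_sum_range, ← Finset.sum_range_add_sum_Ico g hmn]
  have hfirst : ∑ j ∈ Finset.range m, g j = cantorLeft m c := by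
    rw [cantorLeft_sum_range]
    apply Finset.sum_congr rfl
    intro j hj
    have hjm : j < m := Finset.mem_range.mp hj
    have hjn : j < n := lt_of_lt_of_le hjm hmn
    simp only [hg, dif_pos hjm, dif_pos hjn]
    have := hcc ⟨j, hjm⟩
    simp only [Fin.castLE] at this
    rw [this]
  constructor
  · rw [hsplit, hfirst]
    have : 0 ≤ ∑ j ∈ Finset.Ico m n, g j := Finset.sum_nonneg fun j _ => hgnn j
    linarith
  · rw [hsplit, hfirst]
    have h2 : ∑ j ∈ Finset.Ico m n, g j ≤ ∑ j ∈ Finset.Ico m n, (cantorLen j - cantorLen (j + 1)) := by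
      apply Finset.sum_le_sum
      intro j hj
      have hjn : j < n := (Finset.mem_Ico.mp hj).2
      simp only [hg, dif_pos hjn]
      split
      · exact le_refl _
      · linarith [cantorLen_anti (Nat.le_succ j)]
    have h3 : ∑ j ∈ Finset.Ico m n, (cantorLen j - cantorLen (j + 1))
        = cantorLen m - cantorLen n := by
      rw [Finset.sum_Ico_eq_sub _ hmn, Finset.sum_range_sub' cantorLen,
        Finset.sum_range_sub' cantorLen, cantorLen_zero]
      ring
    rw [h3] at h2
    linarith

lemma cantorStage_eq (m : ℕ) : cantorStage m =
    ⋃ c : Fin m → Bool, Set.Icc (cantorLeft m c) (cantorLeft m c + cantorLen m) := by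
  ext x
  simp [cantorStage, Set.mem_iUnion, Set.mem_Icc]

lemma cantorStage_closed (m : ℕ) : IsClosed (cantorStage m) := by
  rw [cantorStage_eq]
  exact isClosed_iUnion_of_finite fun c => isClosed_Icc

lemma cantorStage_subset (m : ℕ) : cantorStage m ⊆ Set.Icc 0 1 := by
  rintro x ⟨c, h1, h2⟩
  exact ⟨le_trans (cantorLeft_nonneg m c) h1, le_trans h2 (cantorLeft_le m c)⟩

lemma cantorReal_compact : IsCompact (⋂ m, cantorStage m) := by
  apply IsCompact.of_isClosed_subset isCompact_Icc (isClosed_iInter cantorStage_closed)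
  exact (Set.iInter_subset _ 0).trans (cantorStage_subset 0)

lemma cantorReal_nonempty : (0 : ℝ) ∈ ⋂ m, cantorStage m := by
  refine Set.mem_iInter.mpr fun m => ⟨fun _ => false, ?_, ?_⟩
  · simp [cantorLeft]
  · simp [cantorLeft]
    exact (cantorLen_pos m).le

lemma cantorSetC_compact : IsCompact cantorSetC :=
  cantorReal_compact.image Complex.continuous_ofReal

lemma cantorSetC_nonempty : cantorSetC.Nonempty :=
  ⟨((0 : ℝ) : ℂ), Set.mem_image_of_mem _ cantorReal_nonempty⟩

lemma knotMeasure_apply (n : ℕ) (F : Set ℂ) :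
    knotMeasure n F = ((2 : ENNReal) ^ (n + 1))⁻¹ *
      ∑ p : (Fin n → Bool) × Bool,
        Measure.dirac ((cantorLeft n p.1 + if p.2 then cantorLen n else 0 : ℝ) : ℂ) F := by
  rw [knotMeasure, Measure.smul_apply, Measure.finset_sum_apply, smul_eq_mul]

instance knotMeasure_prob (n : ℕ) : IsProbabilityMeasure (knotMeasure n) := by
  constructor
  rw [knotMeasure_apply]
  have : ∀ p : (Fin n → Bool) × Bool,
      Measure.dirac ((cantorLeft n p.1 + if p.2 then cantorLen n else 0 : ℝ) : ℂ) Set.univ = 1 :=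
    fun p => Measure.dirac_apply_of_mem (Set.mem_univ _)
  rw [Finset.sum_congr rfl fun p _ => this p]
  simp only [Finset.sum_const, Finset.card_univ, Fintype.card_prod, Fintype.card_fun,
    Fintype.card_bool, Fintype.card_fin, nsmul_eq_mul, mul_one]
  have h2 : ((2 ^ n * 2 : ℕ) : ENNReal) = 2 ^ (n + 1) := by
    push_cast
    ring
  rw [h2, ENNReal.inv_mul_cancel (by positivity) (by exact ENNReal.pow_ne_top (by norm_num))]

lemma knotMeasure_lower {m n : ℕ} (hmn : m ≤ n) (c : Fin m → Bool) (F : Set ℂ)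
    (hsub : ∀ x : ℝ, cantorLeft m c ≤ x → x ≤ cantorLeft m c + cantorLen m → (x : ℂ) ∈ F) :
    ((2 : ENNReal) ^ m)⁻¹ ≤ knotMeasure n F := by
  classical
  set ext : (Fin (n - m) → Bool) × Bool → (Fin n → Bool) × Bool := fun q =>
    (fun j => if h : (j : ℕ) < m then c ⟨j, h⟩ else q.1 ⟨(j : ℕ) - m, by omega⟩, q.2) with hext
  have hinj : Function.Injective ext := by
    intro q q' hqq
    rw [Prod.ext_iff] at hqq
    obtain ⟨hq1, hq2⟩ := hqq
    have h2 : q.2 = q'.2 := hq2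
    have h1 : q.1 = q'.1 := by
      funext i
      have := congrFun hq1 ⟨m + (i : ℕ), by omega⟩
      simp only [hext] at this
      rw [dif_neg (by omega), dif_neg (by omega)] at this
      simpa [Nat.add_sub_cancel_left] using this
    exact Prod.ext h1 h2
  have hmem : ∀ q, ((cantorLeft n (ext q).1 +
      if (ext q).2 then cantorLen n else 0 : ℝ) : ℂ) ∈ F := by
    intro q
    have hcc : ∀ j : Fin m, (ext q).1 (Fin.castLE hmn j) = c j := by
      intro j
      simp only [hext, Fin.castLE]
      rw [dif_pos j.isLt]
    obtain ⟨hle, hge⟩ := cantorLeft_nest hmn c (ext q).1 hcc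
    apply hsub
    · have : (0:ℝ) ≤ if (ext q).2 then cantorLen n else 0 := by
        split
        · exact (cantorLen_pos n).le
        · exact le_refl 0
      linarith
    · have : (if (ext q).2 then cantorLen n else 0 : ℝ) ≤ cantorLen n := by
        split
        · exact le_refl _
        · exact (cantorLen_pos n).le
      linarith
  rw [knotMeasure_apply]
  have hsum : ((2 : ENNReal) ^ (n - m + 1)) ≤
      ∑ p : (Fin n → Bool) × Bool,
        Measure.dirac ((cantorLeft n p.1 + if p.2 then cantorLen n else 0 : ℝ) : ℂ) F := by
    have := Finset.sum_le_sum_of_subset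
      (Finset.subset_univ (Finset.univ.image ext))
      (f := fun p => Measure.dirac
        ((cantorLeft n p.1 + if p.2 then cantorLen n else 0 : ℝ) : ℂ) F)
    refine le_trans ?_ this
    rw [Finset.sum_image (fun a _ b _ h => hinj h)]
    have : ∀ q : (Fin (n - m) → Bool) × Bool, q ∈ Finset.univ → Measure.dirac
        ((cantorLeft n (ext q).1 + if (ext q).2 then cantorLen n else 0 : ℝ) : ℂ) F = 1 :=
      fun q _ => Measure.dirac_apply_of_mem (hmem q)
    rw [Finset.sum_congr rfl this]
    simp only [Finset.sum_const, Finset.card_univ, Fintype.card_prod, Fintype.card_fun,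
      Fintype.card_bool, Fintype.card_fin, nsmul_eq_mul, mul_one]
    push_cast
    rw [pow_succ]
  calc ((2 : ENNReal) ^ m)⁻¹
      = ((2 : ENNReal) ^ (n + 1))⁻¹ * 2 ^ (n - m + 1) := by
        have hexp : (2 : ENNReal) ^ (n + 1) = 2 ^ (n - m + 1) * 2 ^ m := by
          rw [← pow_add]
          congr 1
          omega
        rw [hexp, ENNReal.mul_inv (Or.inl (by positivity)) (Or.inl (ENNReal.pow_ne_top (by norm_num))), mul_comm ((2 ^ (n - m + 1) : ENNReal))⁻¹,
          mul_assoc, ENNReal.inv_mul_cancel (by positivity) (by exact ENNReal.pow_ne_top (by norm_num)), mul_one]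
    _ ≤ ((2 : ENNReal) ^ (n + 1))⁻¹ *
      ∑ p : (Fin n → Bool) × Bool,
        Measure.dirac ((cantorLeft n p.1 + if p.2 then cantorLen n else 0 : ℝ) : ℂ) F :=
      mul_le_mul_right hsum _

lemma mu_closed_lower (μ : Measure ℂ) [IsProbabilityMeasure μ]
    (hweak : ∀ f : BoundedContinuousFunction ℂ ℝ,
      Tendsto (fun m => ∫ z, f z ∂(knotMeasure m)) atTop (nhds (∫ z, f z ∂μ)))
    {m : ℕ} (c : Fin m → Bool) {F : Set ℂ} (hFcl : IsClosed F)
    (hsub : ∀ x : ℝ, cantorLeft m c ≤ x → x ≤ cantorLeft m c + cantorLen m → (x : ℂ) ∈ F) :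
    ((2 : ENNReal) ^ m)⁻¹ ≤ μ F := by
  set P : ℕ → ProbabilityMeasure ℂ := fun n => ⟨knotMeasure n, inferInstance⟩
  set Q : ProbabilityMeasure ℂ := ⟨μ, inferInstance⟩
  have htend : Tendsto P atTop (nhds Q) :=
    ProbabilityMeasure.tendsto_iff_forall_integral_tendsto.mpr hweak
  have hlim := ProbabilityMeasure.limsup_measure_closed_le_of_tendsto htend hFcl
  refine le_trans ?_ hlim
  apply le_limsup_of_frequently_le'
  apply Filter.Eventually.frequently
  filter_upwards [eventually_ge_atTop m] with n hn
  exact knotMeasure_lower hn c F hsub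

lemma dist_coeC (x y : ℝ) : dist (x:ℂ) (y:ℂ) = |x - y| := by
  rw [Complex.dist_eq, ← Complex.ofReal_sub, Complex.norm_real, Real.norm_eq_abs]

/-- if `μ` is a probability measure carried by the Cantor set `K` which is
the weak limit of the knot-point measures `μ_m`, then its logarithmic potential
satisfies `U^μ(z) ≤ C₁ · ln dist(z,K) / √(ln(1/dist(z,K))) + C₂` for `z ∉ K` with
`dist(z,K) < 1`. -/
theorem potential_upper_bound (μ : Measure ℂ) [IsProbabilityMeasure μ]
    (hsupp : μ cantorSetCᶜ = 0)
    (hweak : ∀ f : BoundedContinuousFunction ℂ ℝ,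
      Tendsto (fun m => ∫ z, f z ∂(knotMeasure m)) atTop (nhds (∫ z, f z ∂μ))) :
    ∃ C₁ C₂ : ℝ, 0 < C₁ ∧ ∀ z : ℂ, z ∉ cantorSetC → Metric.infDist z cantorSetC < 1 →
      (∫ w, Real.log (‖z - w‖) ∂μ)
        ≤ C₁ * Real.log (Metric.infDist z cantorSetC) /
            Real.sqrt (Real.log (Metric.infDist z cantorSetC)⁻¹) + C₂ := by
  have hlog4 : (0:ℝ) < Real.log 4 := Real.log_pos (by norm_num)
  have hlog2 : (0:ℝ) < Real.log 2 := Real.log_pos (by norm_num)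
  have hlog42 : Real.log 4 = 2 * Real.log 2 := by
    rw [show (4:ℝ) = 2^2 by norm_num, Real.log_pow]; push_cast; ring
  set C₁ : ℝ := Real.sqrt (Real.log 4) / 4 with hC₁
  refine ⟨C₁, 2 * Real.log 2, by positivity, ?_⟩
  intro z hz hd1
  set d := Metric.infDist z cantorSetC with hdd
  have hKc : IsCompact cantorSetC := cantorSetC_compact
  have hKcl : IsClosed cantorSetC := hKc.isClosed
  have hd0 : 0 < d := (hKcl.notMem_iff_infDist_pos cantorSetC_nonempty).mp hz
  -- choose m with cantorLen (m+1) < d ≤ cantorLen m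
  have hex : ∃ n, cantorLen n < d := by
    obtain ⟨k, hk⟩ := exists_pow_lt_of_lt_one hd0 (by norm_num : (1/4:ℝ) < 1)
    refine ⟨k + 1, lt_of_le_of_lt ?_ hk⟩
    have hk4 : k ≤ 4 ^ k := Nat.le_of_lt (Nat.lt_pow_self (n := k) (by norm_num))
    have : cantorT (k+1) = 4 ^ k := by simp [cantorT]
    rw [cantorLen, this]
    exact pow_le_pow_of_le_one (by norm_num) (by norm_num) hk4
  set n₀ := Nat.find hex with hn₀def
  have hn₀ : cantorLen n₀ < d := Nat.find_spec hex
  have hn₀pos : n₀ ≠ 0 := by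
    intro h
    rw [h, cantorLen_zero] at hn₀
    linarith
  set m := n₀ - 1 with hmdef
  have hm1 : m + 1 = n₀ := by omega
  have hdm : d ≤ cantorLen m := not_lt.mp (Nat.find_min hex (by omega))
  have hdm1 : cantorLen (m + 1) < d := by rw [hm1]; exact hn₀
  -- nearest point
  obtain ⟨x₀, hx₀K, hx₀d⟩ := hKc.exists_infDist_eq_dist cantorSetC_nonempty z
  obtain ⟨r₀, hr₀, rfl⟩ := hx₀K
  obtain ⟨c, hc1, hc2⟩ := Set.mem_iInter.mp hr₀ m
  set a := cantorLeft m c with hadef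
  set F : Set ℂ := Complex.re ⁻¹' Set.Icc a (a + cantorLen m) with hFdef
  have hFcl : IsClosed F := isClosed_Icc.preimage Complex.continuous_re
  have hFm : MeasurableSet F := hFcl.measurableSet
  have hμF : ((2 : ENNReal) ^ m)⁻¹ ≤ μ F := by
    apply mu_closed_lower μ hweak c hFcl
    intro x h1 h2
    exact Set.mem_preimage.mpr (by simpa using Set.mem_Icc.mpr ⟨h1, h2⟩)
  -- real-valued measures
  set p := (μ F).toReal with hpdef
  set q := (μ Fᶜ).toReal with hqdef
  have hp : ((2:ℝ) ^ m)⁻¹ ≤ p := by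
    have := ENNReal.toReal_mono (measure_ne_top μ F) hμF
    simpa [ENNReal.toReal_inv, ENNReal.toReal_pow] using this
  have hpq : p + q = 1 := by
    have h := prob_add_prob_compl (μ := μ) hFm
    have := congrArg ENNReal.toReal h
    rwa [ENNReal.toReal_add (measure_ne_top μ F) (measure_ne_top μ Fᶜ), ENNReal.toReal_one] at this
  have hp1 : p ≤ 1 := by
    have h := (ENNReal.toReal_le_toReal (measure_ne_top μ F) ENNReal.one_ne_top).mpr
      (prob_le_one (μ := μ) (s := F))
    simpa using h
  have hq0 : 0 ≤ q := ENNReal.toReal_nonneg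
  -- bounds on |z - w|
  have hmemK : ∀ w ∈ cantorSetC, ∃ r : ℝ, w = (r:ℂ) ∧ 0 ≤ r ∧ r ≤ 1 ∧
      (w ∈ F → a ≤ r ∧ r ≤ a + cantorLen m) := by
    rintro w ⟨r, hr, rfl⟩
    have hr01 := cantorStage_subset 0 (Set.mem_iInter.mp hr 0)
    refine ⟨r, rfl, hr01.1, hr01.2, ?_⟩
    intro hwF
    simpa using Set.mem_preimage.mp hwF
  have hr₀ab : a ≤ r₀ ∧ r₀ ≤ a + cantorLen m := ⟨hc1, hc2⟩
  have hlb : ∀ w ∈ cantorSetC, d ≤ ‖z - w‖ := by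
    intro w hw
    rw [← Complex.dist_eq]
    exact Metric.infDist_le_dist_of_mem hw
  have hub : ∀ w ∈ cantorSetC, ‖z - w‖ ≤ 2 := by
    intro w hw
    obtain ⟨r, rfl, hr0, hr1, -⟩ := hmemK w hw
    rw [← Complex.dist_eq]
    calc dist z (r:ℂ) ≤ dist z (r₀:ℂ) + dist (r₀:ℂ) (r:ℂ) := dist_triangle _ _ _
      _ ≤ d + 1 := by
          refine add_le_add (le_of_eq hx₀d.symm) ?_
          rw [dist_coeC, abs_le]
          have h01 := cantorStage_subset 0 (Set.mem_iInter.mp hr₀ 0)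
          constructor <;> linarith [h01.1, h01.2]
      _ ≤ 2 := by linarith
  have hubF : ∀ w ∈ cantorSetC, w ∈ F → ‖z - w‖ ≤ 2 * cantorLen m := by
    intro w hw hwF
    obtain ⟨r, rfl, -, -, hF⟩ := hmemK w hw
    obtain ⟨hra, hrb⟩ := hF hwF
    rw [← Complex.dist_eq]
    calc dist z (r:ℂ) ≤ dist z (r₀:ℂ) + dist (r₀:ℂ) (r:ℂ) := dist_triangle _ _ _
      _ ≤ d + cantorLen m := by
          refine add_le_add (le_of_eq hx₀d.symm) ?_
          rw [dist_coeC, abs_le]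
          constructor <;> linarith [hr₀ab.1, hr₀ab.2]
      _ ≤ 2 * cantorLen m := by linarith
  -- integrability
  have haeK : ∀ᵐ w ∂μ, w ∈ cantorSetC := by
    rw [MeasureTheory.ae_iff]
    exact hsupp
  set f : ℂ → ℝ := fun w => Real.log (‖z - w‖) with hfdef
  have hfm : AEStronglyMeasurable f μ := by
    apply Measurable.aestronglyMeasurable
    exact Real.measurable_log.comp
      ((continuous_norm.comp (continuous_const.sub continuous_id)).measurable)
  have hfi : Integrable f μ := by
    apply Integrable.mono' (integrable_const (|Real.log d| + Real.log 2)) hfm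
    filter_upwards [haeK] with w hw
    rw [Real.norm_eq_abs, abs_le]
    have h1 : Real.log d ≤ f w := Real.log_le_log hd0 (hlb w hw)
    have h2 : f w ≤ Real.log 2 := by
      apply Real.log_le_log (lt_of_lt_of_le hd0 (hlb w hw)) (hub w hw)
    constructor
    · linarith [neg_abs_le (Real.log d), hlog2.le]
    · linarith [le_abs_self (Real.log d), abs_nonneg (Real.log d)]
  set L1 : ℝ := Real.log (2 * cantorLen m) with hL1def
  set g : ℂ → ℝ := fun w => Set.indicator F (fun _ => L1) w +
      Set.indicator Fᶜ (fun _ => Real.log 2) w with hgdef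
  have hgi : Integrable g μ :=
    ((integrable_const _).indicator hFm).add ((integrable_const _).indicator hFm.compl)
  have hfg : f ≤ᵐ[μ] g := by
    filter_upwards [haeK] with w hw
    by_cases hwF : w ∈ F
    · have : g w = L1 := by
        simp [hgdef, Set.indicator_of_mem hwF, Set.indicator_of_notMem (Set.notMem_compl_iff.mpr hwF)]
      rw [this]
      exact Real.log_le_log (lt_of_lt_of_le hd0 (hlb w hw)) (hubF w hw hwF)
    · have : g w = Real.log 2 := by
        simp [hgdef, Set.indicator_of_notMem hwF, Set.indicator_of_mem (Set.mem_compl hwF)]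
      rw [this]
      exact Real.log_le_log (lt_of_lt_of_le hd0 (hlb w hw)) (hub w hw)
  have hint : ∫ w, f w ∂μ ≤ p * L1 + q * Real.log 2 := by
    calc ∫ w, f w ∂μ ≤ ∫ w, g w ∂μ := integral_mono_ae hfi hgi hfg
      _ = p * L1 + q * Real.log 2 := by
          rw [hgdef]
          rw [integral_add ((integrable_const _).indicator hFm)
            ((integrable_const _).indicator hFm.compl)]
          rw [integral_indicator_const _ hFm, integral_indicator_const _ hFm.compl]
          simp [smul_eq_mul, hpdef, hqdef, measureReal_def]
  -- arithmetic endgame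
  set L : ℝ := Real.log d⁻¹ with hLdef
  have hL0 : 0 < L := Real.log_pos ((one_lt_inv₀ hd0).mpr hd1)
  have hLle : L ≤ 4 ^ m * Real.log 4 := by
    have h1 : d⁻¹ ≤ (cantorLen (m+1))⁻¹ := by
      apply inv_anti₀ (cantorLen_pos (m+1)) hdm1.le
    have h2 : L ≤ Real.log (cantorLen (m+1))⁻¹ :=
      Real.log_le_log (by positivity) h1
    have h3 : Real.log (cantorLen (m+1))⁻¹ = 4 ^ m * Real.log 4 := by
      have hT : cantorT (m+1) = 4 ^ m := by simp [cantorT]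
      rw [Real.log_inv]
      simp only [cantorLen, hT]
      rw [Real.log_pow, one_div, Real.log_inv]
      push_cast
      ring
    linarith
  have hsqrtL : Real.sqrt L ≤ 2 ^ m * Real.sqrt (Real.log 4) := by
    calc Real.sqrt L ≤ Real.sqrt (4 ^ m * Real.log 4) := Real.sqrt_le_sqrt hLle
      _ = 2 ^ m * Real.sqrt (Real.log 4) := by
          rw [show (4:ℝ)^m = ((2:ℝ)^m)^2 by
              rw [← pow_mul, mul_comm m 2, pow_mul]; norm_num,
            Real.sqrt_mul (sq_nonneg _), Real.sqrt_sq (by positivity)]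
  have hRHS : C₁ * Real.log d / Real.sqrt L = -(C₁ * Real.sqrt L) := by
    have hlogd : Real.log d = -L := by rw [hLdef, Real.log_inv]; ring
    rw [hlogd, mul_neg, neg_div, mul_div_assoc, Real.div_sqrt]
  rw [hRHS]
  -- final: p * L1 + q * log 2 ≤ -(C₁ √L) + 2 log 2
  have hC₁sq : C₁ * (2 ^ m * Real.sqrt (Real.log 4)) = 2 ^ m * Real.log 4 / 4 := by
    rw [hC₁]
    rw [div_mul_eq_mul_div, mul_comm (Real.sqrt (Real.log 4)), mul_assoc]
    rw [Real.mul_self_sqrt hlog4.le]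
  have hC₁L : C₁ * Real.sqrt L ≤ 2 ^ m * Real.log 4 / 4 := by
    rw [← hC₁sq]
    exact mul_le_mul_of_nonneg_left hsqrtL (by positivity)
  refine le_trans hint ?_
  rcases Nat.eq_zero_or_pos m with hm0 | hmpos
  · -- m = 0 : L1 = log 2, p + q = 1
    have hL1 : L1 = Real.log 2 := by
      rw [hL1def, hm0, cantorLen_zero, mul_one]
    rw [hL1, ← add_mul, hpq, one_mul]
    rw [hm0] at hC₁L
    have h0 : C₁ * Real.sqrt L ≤ Real.log 4 / 4 := by simpa using hC₁L
    have h44 : Real.log 4 / 4 ≤ Real.log 2 := by rw [hlog42]; linarith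
    linarith
  · -- m ≥ 1
    have hp0 : (0:ℝ) ≤ p := ENNReal.toReal_nonneg
    have hq1 : q ≤ 1 := by
      have h2m0 : (0:ℝ) ≤ ((2:ℝ) ^ m)⁻¹ := by positivity
      linarith
    have hL1eq : L1 = Real.log 2 - (4:ℝ) ^ (m - 1) * Real.log 4 := by
      have hT : cantorT m = 4 ^ (m - 1) := by
        rw [cantorT, if_neg (by omega)]
      rw [hL1def]
      simp only [cantorLen, hT]
      rw [Real.log_mul (by norm_num) (by positivity), Real.log_pow, one_div, Real.log_inv]
      push_cast
      ring
    have h4m : (1:ℝ) ≤ (4:ℝ) ^ (m - 1) := one_le_pow₀ (by norm_num)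
    have hL1neg : L1 ≤ 0 := by
      rw [hL1eq]
      nlinarith [hlog42, hlog2]
    have hstep : p * L1 ≤ ((2:ℝ) ^ m)⁻¹ * L1 := mul_le_mul_of_nonpos_right hp hL1neg
    have hpow : ((2:ℝ) ^ m)⁻¹ * (4:ℝ) ^ (m - 1) = 2 ^ m / 4 := by
      have h2m : ((2:ℝ) ^ m) ≠ 0 := by positivity
      have h4 : (4:ℝ) ^ (m - 1) * 4 = (2:ℝ) ^ m * 2 ^ m := by
        rw [show (4:ℝ) = 2^2 by norm_num, ← pow_mul, ← pow_add, ← pow_add]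
        congr 1
        omega
      rw [inv_mul_eq_div, div_eq_div_iff h2m (by norm_num)]
      linarith [h4]
    have hinv1 : ((2:ℝ) ^ m)⁻¹ ≤ 1 := by
      rw [inv_le_one_iff₀]
      right
      exact one_le_pow₀ (by norm_num)
    have hmain : ((2:ℝ) ^ m)⁻¹ * L1 ≤ Real.log 2 - 2 ^ m * Real.log 4 / 4 := by
      rw [hL1eq, mul_sub, ← mul_assoc, hpow]
      have h1 : ((2:ℝ)^m)⁻¹ * Real.log 2 ≤ Real.log 2 :=
        mul_le_of_le_one_left hlog2.le hinv1
      linarith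
    have hqlog : q * Real.log 2 ≤ Real.log 2 := mul_le_of_le_one_left hlog2.le hq1
    linarith [hstep, hmain, hqlog, hC₁L]
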